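/- Let n ≥ 4 and let z(n, n-1) denote the maximum cardinality of a finite set of points in the plane, in general position with pairwise distinct x-coordinates, containing no n-cup, no (n-1)-cap, and no n points in convex position. If S is a finite set of points in the plane in general position containing no n points in convex position, then |S| ≤ z(n, n-1) + 1. -/

import Mathlib

/-!
Common definitions: points in the plane, general position, distinct x-coordinates,
cups, caps, convex position, and the combinatorial functions from the paper.
-/

open Finset

/-- A point in the Euclidean plane, with `p.1` its x-coordinate and `p.2` its y-coordinate. -/
abbrev Pt : Type := ℝ × ℝ

/-- A set of points is in general position if no three (distinct) of its points are collinear. -/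
def GenPos (S : Set Pt) : Prop :=
  ∀ p ∈ S, ∀ q ∈ S, ∀ r ∈ S, p ≠ q → p ≠ r → q ≠ r → ¬ Collinear ℝ ({p, q, r} : Set Pt)

/-- A set of points has pairwise distinct x-coordinates. -/
def DistinctX (S : Set Pt) : Prop :=
  ∀ p ∈ S, ∀ q ∈ S, p ≠ q → p.1 ≠ q.1

/-- The slope of the segment from `p` to `q`. -/
noncomputable def PtSlope (p q : Pt) : ℝ := (q.2 - p.2) / (q.1 - p.1)

/-- `f 0, f 1, …, f (k-1)` is a `k`-cup in `P`: the points lie in `P`, are listed in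
increasing order of x-coordinate, and the slopes of consecutive segments strictly increase. -/
def IsCupSeq (k : ℕ) (P : Set Pt) (f : ℕ → Pt) : Prop :=
  (∀ i, i < k → f i ∈ P) ∧
  (∀ i j, i < j → j < k → (f i).1 < (f j).1) ∧
  (∀ i, i + 2 < k → PtSlope (f i) (f (i + 1)) < PtSlope (f (i + 1)) (f (i + 2)))

/-- `f 0, f 1, …, f (k-1)` is a `k`-cap in `P`: the points lie in `P`, are listed in
increasing order of x-coordinate, and the slopes of consecutive segments strictly decrease. -/
def IsCapSeq (k : ℕ) (P : Set Pt) (f : ℕ → Pt) : Prop :=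
  (∀ i, i < k → f i ∈ P) ∧
  (∀ i j, i < j → j < k → (f i).1 < (f j).1) ∧
  (∀ i, i + 2 < k → PtSlope (f i) (f (i + 1)) > PtSlope (f (i + 1)) (f (i + 2)))

/-- `P` contains a `k`-cup. -/
def HasCup (k : ℕ) (P : Set Pt) : Prop := ∃ f : ℕ → Pt, IsCupSeq k P f

/-- `P` contains a `k`-cap. -/
def HasCap (k : ℕ) (P : Set Pt) : Prop := ∃ f : ℕ → Pt, IsCapSeq k P f

/-- `S` is `(n, m)`-free: it contains no `n`-cup and no `m`-cap. -/
def IsFree (n m : ℕ) (S : Set Pt) : Prop := ¬ HasCup n S ∧ ¬ HasCap m S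

/-- A set of points is in convex position: every point of the set is a vertex (extreme point)
of its convex hull, i.e. no point lies in the convex hull of the others. -/
def ConvexPos (S : Set Pt) : Prop := ∀ p ∈ S, p ∉ convexHull ℝ (S \ {p})

/-- `S` contains `n` points in convex position. -/
def HasConvexNGon (n : ℕ) (S : Set Pt) : Prop :=
  ∃ T : Finset Pt, ↑T ⊆ S ∧ T.card = n ∧ ConvexPos ↑T

/-- The set of cardinalities of finite planar point sets, in general position with pairwise
distinct x-coordinates, containing no `n`-cup and no `m`-cap.  The Erdős–Szekeres cup–cap
number `f(n, m)` is the greatest element of this set. -/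
def CupCapCards (n m : ℕ) : Set ℕ :=
  {N : ℕ | ∃ S : Finset Pt, S.card = N ∧ GenPos ↑S ∧ DistinctX ↑S ∧
    ¬ HasCup n ↑S ∧ ¬ HasCap m ↑S}

/-- The defining property of the Erdős–Szekeres number `f(n) = N`: `N` is the smallest
positive integer such that every set of `N` points in general position in the plane
contains `n` points in convex position. -/
def IsESNumber (n N : ℕ) : Prop :=
  IsLeast {N : ℕ | 0 < N ∧
    ∀ S : Finset Pt, GenPos ↑S → S.card = N → HasConvexNGon n ↑S} N

/-- The point `r` lies strictly below the (non-vertical) line through `p` and `q`. -/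
noncomputable def StrictlyBelow (p q r : Pt) : Prop :=
  r.2 < p.2 + PtSlope p q * (r.1 - p.1)

/-- The point `s ∈ S` is `(m, l)`-good: for every `n ≥ 4` and every finite set `B` of at most
`n - 2` points such that `S ∪ B` is in general position with pairwise distinct x-coordinates
and contains an `(n-1)`-cup with leftmost point `s` and rightmost point in `B`, the set
`S ∪ B` contains an `l`-cap whose two rightmost points lie in `S`, or an `m`-cup whose two
leftmost points lie in `S`, or `n` points in convex position. -/
def IsGoodPoint (m l : ℕ) (S : Finset Pt) (s : Pt) : Prop :=
  ∀ n : ℕ, 4 ≤ n → ∀ B : Finset Pt, B.card ≤ n - 2 →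
    GenPos ↑(S ∪ B) → DistinctX ↑(S ∪ B) →
    (∃ f : ℕ → Pt, IsCupSeq (n - 1) ↑(S ∪ B) f ∧ f 0 = s ∧ f (n - 2) ∈ B) →
    ((∃ f : ℕ → Pt, IsCapSeq l ↑(S ∪ B) f ∧ f (l - 2) ∈ S ∧ f (l - 1) ∈ S) ∨
     (∃ f : ℕ → Pt, IsCupSeq m ↑(S ∪ B) f ∧ f 0 ∈ S ∧ f 1 ∈ S) ∨
     HasConvexNGon n ↑(S ∪ B))

/-- The weight functions `wᵢ(m, k)` from the paper. -/
def w (i m k : ℕ) : ℕ :=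
  if i = 4 then
    Nat.choose (m + k - 6) (k - 2) + Nat.choose (m + k - 7) (k - 3) +
      2 * Nat.choose (m + k - 8) (k - 4)
  else if k < i then 0
  else (i - 1) * Nat.choose (m + k - i - 4) (k - i)

/-- `g(m, l) = Σ_{i=4}^{∞} wᵢ(m, l) = Σ_{i=4}^{l} wᵢ(m, l)` (the sum is finite since
`wᵢ(m, l) = 0` for `i > l`). -/
def g (m l : ℕ) : ℕ := ∑ i ∈ Finset.Icc 4 l, w i m l


/-! ### Auxiliary machinery for the proof of Statement 8 -/

noncomputable section Stmt8Aux

namespace Stmt8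

/-- Twice the signed area of the triangle `a b c`. -/
def det3 (a b c : Pt) : ℝ := (b.1 - a.1) * (c.2 - a.2) - (b.2 - a.2) * (c.1 - a.1)

/-- The projective transformation used in the Tóth–Valtr argument. -/
def phi (q : Pt) : Pt := (q.2 / q.1, -1 / q.1)

/-- A shear followed by a translation. -/
def Efun (t : ℝ) (c : Pt) (w : Pt) : Pt := (w.1 + t * w.2 - c.1, w.2 - c.2)

lemma collinear_iff_det3 (a b c : Pt) : Collinear ℝ ({a, b, c} : Set Pt) ↔ det3 a b c = 0 := by
  rw [collinear_iff_of_mem (Set.mem_insert a {b, c})]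
  constructor
  · rintro ⟨v, hv⟩
    obtain ⟨rb, hb⟩ := hv b (by simp)
    obtain ⟨rc, hc⟩ := hv c (by simp)
    have hb1 : b.1 = rb * v.1 + a.1 := by rw [hb]; rfl
    have hb2 : b.2 = rb * v.2 + a.2 := by rw [hb]; rfl
    have hc1 : c.1 = rc * v.1 + a.1 := by rw [hc]; rfl
    have hc2 : c.2 = rc * v.2 + a.2 := by rw [hc]; rfl
    unfold det3; rw [hb1, hb2, hc1, hc2]; ring
  · intro h
    by_cases hb : b = a
    · refine ⟨c - a, ?_⟩
      intro p hp
      rcases hp with rfl | rfl | rfl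
      · exact ⟨0, by simp⟩
      · exact ⟨0, by simp [hb]⟩
      · exact ⟨1, by simp⟩
    · refine ⟨b - a, ?_⟩
      intro p hp
      have hba : b.1 - a.1 ≠ 0 ∨ b.2 - a.2 ≠ 0 := by
        by_contra hcon
        push_neg at hcon
        exact hb (Prod.ext (by linarith [hcon.1]) (by linarith [hcon.2]))
      rcases hp with rfl | rfl | rfl
      · exact ⟨0, by simp⟩
      · exact ⟨1, by simp⟩
      · unfold det3 at h
        rcases hba with h1 | h1
        · refine ⟨(p.1 - a.1) / (b.1 - a.1), ?_⟩
          have e1 : p.1 = (p.1 - a.1) / (b.1 - a.1) * (b.1 - a.1) + a.1 := by field_simp; ring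
          have e2 : p.2 = (p.1 - a.1) / (b.1 - a.1) * (b.2 - a.2) + a.2 := by
            field_simp; nlinarith [h]
          exact Prod.ext (by simpa using e1) (by simpa using e2)
        · refine ⟨(p.2 - a.2) / (b.2 - a.2), ?_⟩
          have e1 : p.1 = (p.2 - a.2) / (b.2 - a.2) * (b.1 - a.1) + a.1 := by
            field_simp; nlinarith [h]
          have e2 : p.2 = (p.2 - a.2) / (b.2 - a.2) * (b.2 - a.2) + a.2 := by field_simp; ring
          exact Prod.ext (by simpa using e1) (by simpa using e2)

lemma convex_halfspace' (A B C : ℝ) : Convex ℝ {w : Pt | 0 ≤ A * w.1 + B * w.2 + C} := by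
  intro x hx y hy a b ha hb hab
  simp only [Set.mem_setOf_eq] at *
  have h1 : (a • x + b • y).1 = a * x.1 + b * y.1 := rfl
  have h2 : (a • x + b • y).2 = a * x.2 + b * y.2 := rfl
  rw [h1, h2]
  have hC : a * C + b * C = C := by linear_combination C * hab
  nlinarith [mul_nonneg ha hx, mul_nonneg hb hy]

lemma hull_halfspace (s : Set Pt) (A B C : ℝ) (h : ∀ r ∈ s, 0 ≤ A * r.1 + B * r.2 + C) :
    ∀ w ∈ convexHull ℝ s, 0 ≤ A * w.1 + B * w.2 + C := fun w hw =>
  convexHull_min h (convex_halfspace' A B C) hw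

lemma not_mem_hull_of_sep (s : Set Pt) (A B C : ℝ) (h : ∀ r ∈ s, 0 ≤ A * r.1 + B * r.2 + C)
    (q : Pt) (hq : A * q.1 + B * q.2 + C < 0) : q ∉ convexHull ℝ s := fun hmem =>
  absurd (hull_halfspace s A B C h q hmem) (not_le.2 hq)

lemma convex_halfspace_gt' : Convex ℝ {w : Pt | 0 < w.1} := by
  intro x hx y hy a b ha hb hab
  simp only [Set.mem_setOf_eq] at *
  have h1 : (a • x + b • y).1 = a * x.1 + b * y.1 := rfl
  rw [h1]
  rcases eq_or_lt_of_le ha with h | h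
  · have : b = 1 := by linarith
    rw [← h, this]; simpa using hy
  · nlinarith [mul_nonneg hb hy.le]

lemma hull_pos_x (s : Set Pt) (h : ∀ r ∈ s, 0 < r.1) : ∀ w ∈ convexHull ℝ s, 0 < w.1 :=
  fun w hw => convexHull_min h convex_halfspace_gt' hw

lemma slope_det3_e1 {p q r : Pt} (h1 : p.1 < q.1) (h2 : q.1 < r.1) :
    PtSlope p q < PtSlope q r ↔ 0 < det3 p q r := by
  unfold PtSlope det3
  rw [div_lt_div_iff₀ (by linarith) (by linarith)]
  constructor <;> intro h <;> nlinarith [h]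

lemma slope_det3_e2 {p q r : Pt} (h1 : p.1 < q.1) (h2 : q.1 < r.1) :
    PtSlope p q < PtSlope p r ↔ 0 < det3 p q r := by
  unfold PtSlope det3
  rw [div_lt_div_iff₀ (by linarith) (by linarith)]
  constructor <;> intro h <;> nlinarith [h]

lemma slope_det3_e3 {p q r : Pt} (h1 : p.1 < q.1) (h2 : q.1 < r.1) :
    PtSlope p r < PtSlope q r ↔ 0 < det3 p q r := by
  unfold PtSlope det3
  rw [div_lt_div_iff₀ (by linarith) (by linarith)]
  constructor <;> intro h <;> nlinarith [h]

lemma det3_trans {a b c d : Pt} (h1 : a.1 < b.1) (h2 : b.1 < c.1) (h3 : c.1 < d.1)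
    (habc : 0 < det3 a b c) (hbcd : 0 < det3 b c d) :
    0 < det3 a b d ∧ 0 < det3 a c d := by
  have s1 : PtSlope a b < PtSlope b c := (slope_det3_e1 h1 h2).2 habc
  have s2 : PtSlope b c < PtSlope b d := (slope_det3_e2 h2 h3).2 hbcd
  have s3 : PtSlope a c < PtSlope b c := (slope_det3_e3 h1 h2).2 habc
  have s4 : PtSlope b c < PtSlope c d := (slope_det3_e1 h2 h3).2 hbcd
  exact ⟨(slope_det3_e1 h1 (lt_trans h2 h3)).1 (lt_trans s1 s2),
    (slope_det3_e1 (lt_trans h1 h2) h3).1 (lt_trans s3 s4)⟩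

lemma cup_master {k : ℕ} {f : ℕ → Pt}
    (hx : ∀ i j, i < j → j < k → (f i).1 < (f j).1)
    (hs : ∀ i, i + 2 < k → PtSlope (f i) (f (i+1)) < PtSlope (f (i+1)) (f (i+2))) :
    ∀ a b c, a < b → b < c → c < k → 0 < det3 (f a) (f b) (f c) := by
  have hcons : ∀ i, i + 2 < k → 0 < det3 (f i) (f (i+1)) (f (i+2)) := by
    intro i hi
    exact (slope_det3_e1 (hx i (i+1) (by omega) (by omega)) (hx (i+1) (i+2) (by omega) hi)).1
      (hs i hi)
  have step1 : ∀ b, ∀ a, a < b → b + 1 < k → 0 < det3 (f a) (f b) (f (b+1)) := by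
    intro b
    induction b using Nat.strong_induction_on with
    | _ b IH =>
      intro a ha hbk
      rcases Nat.lt_or_ge a (b-1) with hab | hab
      · obtain ⟨m, rfl⟩ : ∃ m, b = m + 1 := ⟨b - 1, by omega⟩
        have h1 : 0 < det3 (f a) (f m) (f (m+1)) := IH m (by omega) a (by omega) (by omega)
        have h2 : 0 < det3 (f m) (f (m+1)) (f (m+2)) := hcons m (by omega)
        exact (det3_trans (hx a m (by omega) (by omega)) (hx m (m+1) (by omega) (by omega))
          (hx (m+1) (m+2) (by omega) (by omega)) h1 h2).2
      · have : a = b - 1 := by omega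
        obtain ⟨m, rfl⟩ : ∃ m, b = m + 1 := ⟨b - 1, by omega⟩
        have : a = m := by omega
        subst this
        exact hcons a (by omega)
  intro a b c hab hbc hck
  induction c using Nat.strong_induction_on with
  | _ c IH =>
    rcases Nat.lt_or_ge (b+1) c with hbc1 | hbc1
    · obtain ⟨m, rfl⟩ : ∃ m, c = m + 1 := ⟨c - 1, by omega⟩
      have h1 : 0 < det3 (f a) (f b) (f m) := IH m (by omega) (by omega) (by omega)
      have h2 : 0 < det3 (f b) (f m) (f (m+1)) := step1 m b (by omega) (by omega)
      exact (det3_trans (hx a b hab (by omega)) (hx b m (by omega) (by omega))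
        (hx m (m+1) (by omega) (by omega)) h1 h2).1
    · have : c = b + 1 := by omega
      subst this
      exact step1 b a hab hck

lemma cap_master {k : ℕ} {f : ℕ → Pt}
    (hx : ∀ i j, i < j → j < k → (f i).1 < (f j).1)
    (hs : ∀ i, i + 2 < k → PtSlope (f i) (f (i+1)) > PtSlope (f (i+1)) (f (i+2))) :
    ∀ a b c, a < b → b < c → c < k → det3 (f a) (f b) (f c) < 0 := by
  set gneg : ℕ → Pt := fun i => ((f i).1, -(f i).2) with hgneg
  have hslope : ∀ i j : ℕ, PtSlope (gneg i) (gneg j) = -PtSlope (f i) (f j) := by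
    intro i j
    show (-(f j).2 - -(f i).2) / ((f j).1 - (f i).1) = -(((f j).2 - (f i).2) / ((f j).1 - (f i).1))
    rw [← neg_div]
    ring_nf
  have hgx : ∀ i j, i < j → j < k → (gneg i).1 < (gneg j).1 := hx
  have hgs : ∀ i, i + 2 < k → PtSlope (gneg i) (gneg (i+1)) < PtSlope (gneg (i+1)) (gneg (i+2)) := by
    intro i hi
    rw [hslope, hslope]
    have := hs i hi
    linarith
  intro a b c hab hbc hck
  have := cup_master hgx hgs a b c hab hbc hck
  have hdet : det3 (gneg a) (gneg b) (gneg c) = -det3 (f a) (f b) (f c) := by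
    simp only [hgneg, det3]
    ring
  linarith [hdet ▸ this]

lemma cup_convexPos {k : ℕ} (hk : 2 ≤ k) {f : ℕ → Pt}
    (hx : ∀ i j, i < j → j < k → (f i).1 < (f j).1)
    (hdet : ∀ a b c, a < b → b < c → c < k → 0 < det3 (f a) (f b) (f c)) :
    ConvexPos ↑((Finset.range k).image f) := by
  intro r hr
  simp only [Finset.coe_image, Finset.coe_range, Set.mem_image, Set.mem_Iio] at hr
  obtain ⟨b, hbk, rfl⟩ := hr
  have hmem : ∀ s ∈ (↑((Finset.range k).image f) : Set Pt) \ {f b},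
      ∃ j, j < k ∧ j ≠ b ∧ f j = s := by
    intro s hs
    obtain ⟨hs1, hs2⟩ := hs
    simp only [Finset.coe_image, Finset.coe_range, Set.mem_image, Set.mem_Iio] at hs1
    obtain ⟨j, hj, rfl⟩ := hs1
    refine ⟨j, hj, ?_, rfl⟩
    rintro rfl
    exact hs2 rfl
  rcases Nat.eq_zero_or_pos b with rfl | hb0
  · apply not_mem_hull_of_sep _ 1 0 (-(f 1).1)
    · intro s hs
      obtain ⟨j, hj, hjb, rfl⟩ := hmem s hs
      rcases Nat.lt_or_ge 1 j with h | h
      · have := hx 1 j h hj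
        linarith
      · have : j = 1 := by omega
        subst this; linarith
    · have := hx 0 1 (by omega) (by omega)
      linarith
  rcases Nat.lt_or_ge b (k-1) with hbk1 | hbk1
  · obtain ⟨a, rfl⟩ : ∃ a, b = a + 1 := ⟨b - 1, by omega⟩
    set c := a + 2 with hc
    have hck : c < k := by omega
    apply not_mem_hull_of_sep _ (-((f c).2 - (f a).2)) ((f c).1 - (f a).1)
      (-((f a).2 * (f c).1 - (f a).1 * (f c).2))
    · intro s hs
      obtain ⟨j, hj, hjb, rfl⟩ := hmem s hs
      have key : ∀ w : Pt, -((f c).2 - (f a).2) * w.1 + ((f c).1 - (f a).1) * w.2 +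
          -((f a).2 * (f c).1 - (f a).1 * (f c).2) = -det3 (f a) w (f c) := by
        intro w; unfold det3; ring
      rw [key]
      rcases Nat.lt_or_ge j a with h | h
      · have : -det3 (f a) (f j) (f c) = det3 (f j) (f a) (f c) := by unfold det3; ring
        rw [this]
        exact (hdet j a c h (by omega) hck).le
      rcases Nat.eq_or_lt_of_le h with rfl | h2
      · have : det3 (f a) (f a) (f c) = 0 := by unfold det3; ring
        rw [this]; norm_num
      rcases Nat.lt_or_ge j c with h3 | h3
      · omega
      rcases Nat.eq_or_lt_of_le h3 with rfl | h4
      · have : det3 (f a) (f c) (f c) = 0 := by unfold det3; ring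
        rw [this]; norm_num
      · have : -det3 (f a) (f j) (f c) = det3 (f a) (f c) (f j) := by unfold det3; ring
        rw [this]
        exact (hdet a c j (by omega) h4 hj).le
    · have key : ∀ w : Pt, -((f c).2 - (f a).2) * w.1 + ((f c).1 - (f a).1) * w.2 +
          -((f a).2 * (f c).1 - (f a).1 * (f c).2) = -det3 (f a) w (f c) := by
        intro w; unfold det3; ring
      rw [key]
      have := hdet a (a+1) c (by omega) (by omega) hck
      linarith
  · apply not_mem_hull_of_sep _ (-1) 0 ((f (k-2)).1)
    · intro s hs
      obtain ⟨j, hj, hjb, rfl⟩ := hmem s hs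
      rcases Nat.lt_or_ge j (k-2) with h | h
      · have := hx j (k-2) h (by omega)
        linarith
      · have : j = k - 2 := by omega
        subst this; linarith
    · have := hx (k-2) b (by omega) hbk
      linarith

lemma phi_inj {a b : Pt} (ha : 0 < a.1) (hb : 0 < b.1) (h : phi a = phi b) : a = b := by
  unfold phi at h
  have h1 : a.2 / a.1 = b.2 / b.1 := congrArg Prod.fst h
  have h2 : -1 / a.1 = -1 / b.1 := congrArg Prod.snd h
  have hx : a.1 = b.1 := by
    field_simp at h2
    linarith
  have hy : a.2 = b.2 := by
    rw [hx] at h1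
    field_simp at h1
    exact h1
  exact Prod.ext hx hy

lemma det3_phi {a b c : Pt} (ha : 0 < a.1) (hb : 0 < b.1) (hc : 0 < c.1) :
    det3 (phi a) (phi b) (phi c) = -det3 a b c / (a.1 * b.1 * c.1) := by
  unfold det3 phi
  field_simp
  ring

lemma phi_fst_eq_iff {a b : Pt} (ha : 0 < a.1) (hb : 0 < b.1) :
    (phi a).1 = (phi b).1 ↔ det3 ((0, 0) : Pt) a b = 0 := by
  unfold phi det3
  simp only
  rw [div_eq_div_iff (ne_of_gt ha) (ne_of_gt hb)]
  constructor <;> intro h <;> nlinarith [h]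

lemma phi_hull {A : Finset Pt} (hA : ∀ r ∈ A, 0 < r.1) {q : Pt}
    (hq : q ∈ convexHull ℝ (↑A : Set Pt)) :
    0 < q.1 ∧ phi q ∈ convexHull ℝ (↑(A.image phi) : Set Pt) := by
  have hq1 : 0 < q.1 := hull_pos_x _ (by exact_mod_cast hA) q hq
  refine ⟨hq1, ?_⟩
  rw [Finset.convexHull_eq] at hq
  obtain ⟨w, hw0, hw1, hcm⟩ := hq
  have hq_eq : q = ∑ y ∈ A, w y • y := by
    rw [← hcm, Finset.centerMass_eq_of_sum_1 _ _ hw1]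
    simp
  have hq_fst : q.1 = ∑ y ∈ A, w y * y.1 := by
    rw [hq_eq, Prod.fst_sum]
    rfl
  have hq_snd : q.2 = ∑ y ∈ A, w y * y.2 := by
    rw [hq_eq, Prod.snd_sum]
    rfl
  have hsum : ∑ y ∈ A, w y * y.1 = q.1 := hq_fst.symm
  have hres := Finset.centerMass_mem_convexHull A
    (w := fun y => w y * y.1)
    (fun y hy => mul_nonneg (hw0 y hy) (hA y hy).le)
    (by rw [hsum]; exact hq1)
    (z := phi)
    (fun y hy => Finset.mem_coe.2 (Finset.mem_image_of_mem _ hy))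
  have h1 : ∑ y ∈ A, (w y * y.1) • phi y = (q.2, -1) := by
    rw [Prod.ext_iff, Prod.fst_sum, Prod.snd_sum]
    constructor
    · rw [hq_snd]
      apply Finset.sum_congr rfl
      intro y hy
      have hy0 : y.1 ≠ 0 := ne_of_gt (hA y hy)
      show (w y * y.1) * (y.2 / y.1) = w y * y.2
      field_simp
    · have : ∀ y ∈ A, ((w y * y.1) • phi y).2 = -(w y) := by
        intro y hy
        have hy0 : y.1 ≠ 0 := ne_of_gt (hA y hy)
        show (w y * y.1) * (-1 / y.1) = -(w y)
        field_simp
      rw [Finset.sum_congr rfl this]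
      show ∑ x ∈ A, -w x = -1
      rw [Finset.sum_neg_distrib, hw1]
  have h2 : A.centerMass (fun y => w y * y.1) phi = phi q := by
    rw [Finset.centerMass, hsum, h1]
    unfold phi
    rw [Prod.ext_iff]
    constructor
    · show q.1⁻¹ * q.2 = q.2 / q.1
      rw [inv_mul_eq_div]
    · show q.1⁻¹ * (-1) = -1 / q.1
      field_simp
  rw [← h2]
  exact hres

lemma convexPos_pullback {A : Finset Pt} (hA : ∀ r ∈ A, 0 < r.1)
    (h : ConvexPos ↑(A.image phi)) : ConvexPos ↑A := by
  intro x hx hcon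
  have hx' : x ∈ A := Finset.mem_coe.1 hx
  have heq : (↑A : Set Pt) \ {x} = ↑(A.erase x) := (Finset.coe_erase _ _).symm
  rw [heq] at hcon
  have h2 := (phi_hull (fun r hr => hA r (Finset.mem_of_mem_erase hr)) hcon).2
  have h3 : (↑((A.erase x).image phi) : Set Pt) ⊆ ↑(A.image phi) \ {phi x} := by
    intro z hz
    simp only [Finset.coe_image, Set.mem_image, Finset.mem_coe, Finset.mem_erase] at hz
    obtain ⟨r, ⟨hrne, hrA⟩, rfl⟩ := hz
    constructor
    · exact Finset.mem_coe.2 (Finset.mem_image_of_mem _ hrA)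
    · simp only [Set.mem_singleton_iff]
      intro he
      exact hrne (phi_inj (hA r hrA) (hA x hx') he)
  have h4 := convexHull_mono h3 h2
  exact h (phi x) (Finset.mem_coe.2 (Finset.mem_image_of_mem _ hx')) h4

lemma cap_origin_convexPos {k : ℕ} (hk : 2 ≤ k) {q : ℕ → Pt}
    (hq : ∀ i, i < k → 0 < (q i).1)
    (hx : ∀ i j, i < j → j < k → (phi (q i)).1 < (phi (q j)).1)
    (hdet : ∀ a b c, a < b → b < c → c < k → det3 (phi (q a)) (phi (q b)) (phi (q c)) < 0) :
    ConvexPos ↑(insert ((0, 0) : Pt) ((Finset.range k).image q)) := by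
  set V := insert ((0, 0) : Pt) ((Finset.range k).image q) with hV
  have hmem : ∀ s ∈ (↑V : Set Pt), s = ((0, 0) : Pt) ∨ ∃ j, j < k ∧ q j = s := by
    intro s hs
    simp only [hV, Finset.coe_insert, Set.mem_insert_iff, Finset.coe_image, Finset.coe_range,
      Set.mem_image, Set.mem_Iio] at hs
    rcases hs with rfl | ⟨j, hj, rfl⟩
    · exact Or.inl rfl
    · exact Or.inr ⟨j, hj, rfl⟩
  intro r hr
  rcases hmem r hr with rfl | ⟨b, hbk, rfl⟩
  · intro hcon
    have : (0 : ℝ) < ((0, 0) : Pt).1 := by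
      refine hull_pos_x _ ?_ _ hcon
      intro s hs
      obtain ⟨hs1, hs2⟩ := hs
      rcases hmem s hs1 with rfl | ⟨j, hj, rfl⟩
      · exact absurd rfl hs2
      · exact hq j hj
    simp at this
  · have hqb1 := hq b hbk
    have hmem2 : ∀ s ∈ (↑V : Set Pt) \ {q b}, s = ((0, 0) : Pt) ∨
        ∃ j, j < k ∧ j ≠ b ∧ q j = s := by
      intro s hs
      obtain ⟨hs1, hs2⟩ := hs
      rcases hmem s hs1 with rfl | ⟨j, hj, rfl⟩
      · exact Or.inl rfl
      · refine Or.inr ⟨j, hj, ?_, rfl⟩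
        rintro rfl
        exact hs2 rfl
    have hval : ∀ (P Q : Pt) (y : Pt), y.1 ≠ 0 →
        (P.2 * Q.1 - P.1 * Q.2) * y.1 + (Q.2 - P.2) * y.2 + (Q.1 - P.1) =
          y.1 * det3 P (phi y) Q := by
      intro P Q y hy
      unfold det3 phi
      field_simp
      ring
    rcases Nat.eq_zero_or_pos b with rfl | hb0
    · set u1 := (phi (q 1)).1 with hu1
      have key : ∀ j, j < k → -u1 * (q j).1 + 1 * (q j).2 + 0 =
          (q j).1 * ((phi (q j)).1 - u1) := by
        intro j hj
        have hxj := hq j hj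
        have huj : (phi (q j)).1 = (q j).2 / (q j).1 := rfl
        rw [huj]
        field_simp
        ring
      apply not_mem_hull_of_sep _ (-u1) 1 0
      · intro s hs
        rcases hmem2 s hs with rfl | ⟨j, hj, hjb, rfl⟩
        · norm_num
        · rw [key j hj]
          have : u1 ≤ (phi (q j)).1 := by
            rcases Nat.lt_or_ge 1 j with h | h
            · exact (hx 1 j h hj).le
            · have : j = 1 := by omega
              subst this; exact le_refl _
          have := hq j hj
          nlinarith
      · rw [key 0 hbk]
        have h01 : (phi (q 0)).1 < u1 := hx 0 1 (by omega) (by omega)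
        nlinarith
    rcases Nat.lt_or_ge b (k - 1) with hbk1 | hbk1
    · obtain ⟨a, rfl⟩ : ∃ a, b = a + 1 := ⟨b - 1, by omega⟩
      set c := a + 2 with hc
      have hck : c < k := by omega
      set P := phi (q a) with hP
      set Q := phi (q c) with hQe
      apply not_mem_hull_of_sep _ (P.2 * Q.1 - P.1 * Q.2) (Q.2 - P.2) (Q.1 - P.1)
      · intro s hs
        rcases hmem2 s hs with rfl | ⟨j, hj, hjb, rfl⟩
        · simp only [Prod.fst, Prod.snd]
          have : P.1 < Q.1 := hx a c (by omega) hck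
          norm_num
          linarith
        · rw [hval P Q (q j) (ne_of_gt (hq j hj))]
          have hxj := hq j hj
          rcases Nat.lt_or_ge j a with h | h
          · have hd := hdet j a c h (by omega) hck
            have : det3 P (phi (q j)) Q = -det3 (phi (q j)) P Q := by unfold det3; ring
            rw [this]
            rw [← hP, ← hQe] at hd
            nlinarith
          rcases Nat.eq_or_lt_of_le h with rfl | h2
          · rw [← hP]
            have : det3 P P Q = 0 := by unfold det3; ring
            rw [this]; norm_num
          rcases Nat.lt_or_ge j c with h3 | h3
          · omega
          rcases Nat.eq_or_lt_of_le h3 with rfl | h4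
          · rw [← hQe]
            have : det3 P Q Q = 0 := by unfold det3; ring
            rw [this]; norm_num
          · have hd := hdet a c j (by omega) h4 hj
            have : det3 P (phi (q j)) Q = -det3 P Q (phi (q j)) := by unfold det3; ring
            rw [this]
            rw [← hP, ← hQe] at hd
            nlinarith
      · rw [hval P Q (q (a+1)) (ne_of_gt hqb1)]
        have hd := hdet a (a+1) c (by omega) (by omega) hck
        rw [← hP, ← hQe] at hd
        nlinarith
    · set u2 := (phi (q (k-2))).1 with hu2
      have key : ∀ j, j < k → u2 * (q j).1 + (-1) * (q j).2 + 0 =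
          (q j).1 * (u2 - (phi (q j)).1) := by
        intro j hj
        have hxj := hq j hj
        have huj : (phi (q j)).1 = (q j).2 / (q j).1 := rfl
        rw [huj]
        field_simp
        ring
      apply not_mem_hull_of_sep _ u2 (-1) 0
      · intro s hs
        rcases hmem2 s hs with rfl | ⟨j, hj, hjb, rfl⟩
        · norm_num
        · rw [key j hj]
          have : (phi (q j)).1 ≤ u2 := by
            rcases Nat.lt_or_ge j (k-2) with h | h
            · exact (hx j (k-2) h (by omega)).le
            · have : j = k - 2 := by omega
              subst this; exact le_refl _
          have := hq j hj
          nlinarith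
      · rw [key b hbk]
        have h01 : u2 < (phi (q b)).1 := hx (k-2) b (by omega) hbk
        nlinarith

lemma Efun_inj (t : ℝ) (c : Pt) : Function.Injective (Efun t c) := by
  intro a b h
  have h2 : a.2 - c.2 = b.2 - c.2 := congrArg Prod.snd h
  have h1 : a.1 + t * a.2 - c.1 = b.1 + t * b.2 - c.1 := congrArg Prod.fst h
  have h3 : a.2 = b.2 := by linarith
  have h4 : t * a.2 = t * b.2 := by rw [h3]
  exact Prod.ext (by linarith) h3

lemma Efun_comp (t : ℝ) (c : Pt) (w : Pt) :
    Efun (-t) (-(c.1 - t * c.2), -c.2) (Efun t c w) = w := by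
  unfold Efun
  exact Prod.ext (by simp; ring) (by simp)

lemma det3_Efun (t : ℝ) (c : Pt) (a b d : Pt) :
    det3 (Efun t c a) (Efun t c b) (Efun t c d) = det3 a b d := by
  unfold det3 Efun; ring

lemma shear_hull (t : ℝ) (c : Pt) {A : Finset Pt} {q : Pt}
    (hq : q ∈ convexHull ℝ (↑A : Set Pt)) :
    Efun t c q ∈ convexHull ℝ (↑(A.image (Efun t c)) : Set Pt) := by
  rw [Finset.convexHull_eq] at hq
  obtain ⟨w, hw0, hw1, hcm⟩ := hq
  have hq_eq : q = ∑ y ∈ A, w y • y := by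
    rw [← hcm, Finset.centerMass_eq_of_sum_1 _ _ hw1]
    simp
  have hq_fst : q.1 = ∑ y ∈ A, w y * y.1 := by rw [hq_eq, Prod.fst_sum]; rfl
  have hq_snd : q.2 = ∑ y ∈ A, w y * y.2 := by rw [hq_eq, Prod.snd_sum]; rfl
  have hres := Finset.centerMass_mem_convexHull A (w := w) hw0
    (by rw [hw1]; norm_num) (z := Efun t c)
    (fun y hy => Finset.mem_coe.2 (Finset.mem_image_of_mem _ hy))
  have h2 : A.centerMass w (Efun t c) = Efun t c q := by
    rw [Finset.centerMass_eq_of_sum_1 _ _ hw1]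
    rw [Prod.ext_iff, Prod.fst_sum, Prod.snd_sum]
    constructor
    · show ∑ y ∈ A, (w y • Efun t c y).1 = q.1 + t * q.2 - c.1
      have : ∀ y ∈ A, (w y • Efun t c y).1 = w y * y.1 + t * (w y * y.2) - w y * c.1 := by
        intro y hy
        show w y * (y.1 + t * y.2 - c.1) = _
        ring
      rw [Finset.sum_congr rfl this]
      rw [Finset.sum_sub_distrib, Finset.sum_add_distrib, ← Finset.mul_sum,
        ← Finset.sum_mul, ← hq_fst, ← hq_snd, hw1]
      ring
    · show ∑ y ∈ A, (w y • Efun t c y).2 = q.2 - c.2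
      have : ∀ y ∈ A, (w y • Efun t c y).2 = w y * y.2 - w y * c.2 := by
        intro y hy
        show w y * (y.2 - c.2) = _
        ring
      rw [Finset.sum_congr rfl this]
      rw [Finset.sum_sub_distrib, ← Finset.sum_mul, ← hq_snd, hw1]
      ring
  rw [← h2]
  exact hres

lemma genpos_shear {S : Finset Pt} (h : GenPos ↑S) (t : ℝ) (c : Pt) :
    GenPos ↑(S.image (Efun t c)) := by
  intro pa ha pb hb pc hc hab hac hbc
  simp only [Finset.coe_image, Set.mem_image, Finset.mem_coe] at ha hb hc
  obtain ⟨a, haS, rfl⟩ := ha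
  obtain ⟨b, hbS, rfl⟩ := hb
  obtain ⟨d, hdS, rfl⟩ := hc
  rw [collinear_iff_det3, det3_Efun]
  rw [← collinear_iff_det3]
  exact h a haS b hbS d hdS (fun e => hab (congrArg _ e)) (fun e => hac (congrArg _ e))
    (fun e => hbc (congrArg _ e))

lemma ngon_shear_back {S : Finset Pt} (t : ℝ) (c : Pt) {n : ℕ}
    (h : HasConvexNGon n ↑(S.image (Efun t c))) : HasConvexNGon n ↑S := by
  obtain ⟨T', hsub, hcard, hpos⟩ := h
  set F := Efun (-t) (-(c.1 - t * c.2), -c.2) with hF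
  have hFE : ∀ w, F (Efun t c w) = w := Efun_comp t c
  have hEF : ∀ y ∈ T', Efun t c (F y) = y := by
    intro y hy
    obtain ⟨s, hsS, rfl⟩ : ∃ s ∈ S, Efun t c s = y := by
      have := hsub (Finset.mem_coe.2 hy)
      simp only [Finset.coe_image, Set.mem_image, Finset.mem_coe] at this
      obtain ⟨s, h1, h2⟩ := this
      exact ⟨s, h1, h2⟩
    rw [hFE]
  refine ⟨T'.image F, ?_, ?_, ?_⟩
  · intro x hx
    simp only [Finset.coe_image, Set.mem_image, Finset.mem_coe] at hx
    obtain ⟨y, hy, rfl⟩ := hx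
    have := hsub (Finset.mem_coe.2 hy)
    simp only [Finset.coe_image, Set.mem_image, Finset.mem_coe] at this
    obtain ⟨s, hsS, rfl⟩ := this
    rw [hFE]
    exact Finset.mem_coe.2 hsS
  · rw [Finset.card_image_of_injective _ (Efun_inj _ _), hcard]
  · intro x hx hcon
    simp only [Finset.coe_image, Set.mem_image, Finset.mem_coe] at hx
    obtain ⟨y, hy, rfl⟩ := hx
    have hEx : Efun t c (F y) = y := hEF y hy
    have h1 : (↑(T'.image F) : Set Pt) \ {F y} = ↑((T'.image F).erase (F y)) :=
      (Finset.coe_erase _ _).symm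
    rw [h1] at hcon
    have h2 := shear_hull t c hcon
    have h3 : (↑(((T'.image F).erase (F y)).image (Efun t c)) : Set Pt) ⊆ ↑T' \ {y} := by
      intro z hz
      simp only [Finset.coe_image, Set.mem_image, Finset.mem_coe, Finset.mem_erase,
        Finset.mem_image] at hz
      obtain ⟨r, ⟨hrne, ⟨y', hy', rfl⟩⟩, rfl⟩ := hz
      rw [hEF y' hy']
      refine ⟨Finset.mem_coe.2 hy', ?_⟩
      simp only [Set.mem_singleton_iff]
      intro he
      exact hrne (by rw [he])
    have h4 := convexHull_mono h3 h2
    rw [hEx] at h4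
    exact hpos y (Finset.mem_coe.2 hy) h4

end Stmt8

end Stmt8Aux

/-- Let `n ≥ 4` and let `z(n, n-1)` be the maximum cardinality of a finite
planar point set, in general position with pairwise distinct x-coordinates, containing no
`n`-cup, no `(n-1)`-cap, and no `n` points in convex position.  If `S` is a finite planar
point set in general position containing no `n` points in convex position, then
`|S| ≤ z(n, n-1) + 1`. -/
theorem stmt_8 (n : ℕ) (hn : 4 ≤ n) (z : ℕ)
    (hz : IsGreatest {N : ℕ | ∃ S : Finset Pt, S.card = N ∧ GenPos ↑S ∧ DistinctX ↑S ∧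
      ¬ HasCup n ↑S ∧ ¬ HasCap (n - 1) ↑S ∧ ¬ HasConvexNGon n ↑S} z)
    (S : Finset Pt) (hgp : GenPos ↑S) (hno : ¬ HasConvexNGon n ↑S) :
    S.card ≤ z + 1 := by
  classical
  obtain ⟨hzmem, hzub⟩ := hz
  rcases Finset.eq_empty_or_nonempty S with rfl | hSne
  · simp
  -- choose a shear parameter `t` making all x-coordinates distinct
  obtain ⟨t, ht⟩ := Infinite.exists_notMem_finset
    ((S ×ˢ S).image (fun pq : Pt × Pt => (pq.2.1 - pq.1.1) / (pq.1.2 - pq.2.2)))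
  have hdistinct : ∀ p ∈ S, ∀ q ∈ S, p ≠ q → p.1 + t * p.2 ≠ q.1 + t * q.2 := by
    intro p hp q hq hpq heq
    by_cases h2 : p.2 = q.2
    · have h3 : t * p.2 = t * q.2 := by rw [h2]
      exact hpq (Prod.ext (by linarith) h2)
    · apply ht
      apply Finset.mem_image.2
      refine ⟨(p, q), Finset.mem_product.2 ⟨hp, hq⟩, ?_⟩
      show (q.1 - p.1) / (p.2 - q.2) = t
      rw [div_eq_iff (sub_ne_zero.2 h2)]
      linear_combination (-1 : ℝ) * heq
  obtain ⟨a0, ha0S, ha0min⟩ := Finset.exists_min_image S (fun w => w.1 + t * w.2) hSne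
  set E : Pt → Pt := Stmt8.Efun t (a0.1 + t * a0.2, a0.2) with hE
  set S' : Finset Pt := S.image E with hS'
  have hEa0 : E a0 = ((0, 0) : Pt) := by
    show (a0.1 + t * a0.2 - (a0.1 + t * a0.2), a0.2 - a0.2) = ((0, 0) : Pt)
    simp
  have hp0 : ((0, 0) : Pt) ∈ S' := by
    rw [hS', ← hEa0]
    exact Finset.mem_image_of_mem _ ha0S
  have hgp' : GenPos ↑S' := Stmt8.genpos_shear hgp t _
  have hno' : ¬ HasConvexNGon n ↑S' := fun h => hno (Stmt8.ngon_shear_back t _ h)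
  set A : Finset Pt := S'.erase ((0, 0) : Pt) with hA
  have hAx : ∀ r ∈ A, 0 < r.1 := by
    intro b hb
    obtain ⟨hbne, hbS'⟩ := Finset.mem_erase.1 hb
    rw [hS'] at hbS'
    obtain ⟨s, hsS, rfl⟩ := Finset.mem_image.1 hbS'
    have hs_ne : s ≠ a0 := by rintro rfl; exact hbne hEa0
    have h1 : a0.1 + t * a0.2 ≤ s.1 + t * s.2 := ha0min s hsS
    have h2 : s.1 + t * s.2 ≠ a0.1 + t * a0.2 := hdistinct s hsS a0 ha0S hs_ne
    show 0 < s.1 + t * s.2 - (a0.1 + t * a0.2)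
    have := lt_of_le_of_ne h1 (Ne.symm h2)
    linarith
  set T : Finset Pt := A.image Stmt8.phi with hT
  have hinjA : Set.InjOn Stmt8.phi ↑A := fun a ha b hb h =>
    Stmt8.phi_inj (hAx a (Finset.mem_coe.1 ha)) (hAx b (Finset.mem_coe.1 hb)) h
  have hcardT : T.card = S.card - 1 := by
    rw [hT, Finset.card_image_of_injOn hinjA, hA, Finset.card_erase_of_mem hp0, hS',
      Finset.card_image_of_injective _ (Stmt8.Efun_inj _ _)]
  have hAS' : ∀ r ∈ A, r ∈ S' := fun r hr => Finset.mem_of_mem_erase hr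
  have hAne0 : ∀ r ∈ A, r ≠ ((0, 0) : Pt) := fun r hr => (Finset.mem_erase.1 hr).1
  -- pulling a convex n-gon in T back to S'
  have hpull : ∀ U : Finset Pt, ↑U ⊆ (↑T : Set Pt) → U.card = n → ConvexPos ↑U → False := by
    intro U hUsub hUcard hUpos
    set Q : Finset Pt := A.filter (fun r => Stmt8.phi r ∈ U) with hQ
    have hQA : Q ⊆ A := Finset.filter_subset _ _
    have hQx : ∀ r ∈ Q, 0 < r.1 := fun r hr => hAx r (hQA hr)
    have himg : Q.image Stmt8.phi = U := by
      apply Finset.Subset.antisymm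
      · intro u hu
        obtain ⟨r, hr, rfl⟩ := Finset.mem_image.1 hu
        exact (Finset.mem_filter.1 hr).2
      · intro u hu
        have h1 : u ∈ (↑T : Set Pt) := hUsub (Finset.mem_coe.2 hu)
        obtain ⟨r, hrA, rfl⟩ := Finset.mem_image.1 (Finset.mem_coe.1 h1)
        exact Finset.mem_image_of_mem _ (Finset.mem_filter.2 ⟨hrA, hu⟩)
    have hQpos : ConvexPos ↑Q := Stmt8.convexPos_pullback hQx (by rw [himg]; exact hUpos)
    have hQcard : Q.card = n := by
      have h1 : (Q.image Stmt8.phi).card = Q.card :=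
        Finset.card_image_of_injOn (hinjA.mono (by exact_mod_cast hQA))
      rw [himg, hUcard] at h1
      omega
    exact hno' ⟨Q, fun x hx => Finset.mem_coe.2 (hAS' x (hQA (Finset.mem_coe.1 hx))),
      hQcard, hQpos⟩
  -- the five properties of T
  have c1 : GenPos ↑T := by
    intro pa ha pb hb pc hc hab hac hbc
    obtain ⟨a, haA, rfl⟩ := Finset.mem_image.1 (Finset.mem_coe.1 ha)
    obtain ⟨b, hbA, rfl⟩ := Finset.mem_image.1 (Finset.mem_coe.1 hb)
    obtain ⟨c, hcA, rfl⟩ := Finset.mem_image.1 (Finset.mem_coe.1 hc)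
    have hxa := hAx a haA
    have hxb := hAx b hbA
    have hxc := hAx c hcA
    have hcol := hgp' a (Finset.mem_coe.2 (hAS' a haA)) b (Finset.mem_coe.2 (hAS' b hbA))
      c (Finset.mem_coe.2 (hAS' c hcA)) (fun e => hab (by rw [e])) (fun e => hac (by rw [e]))
      (fun e => hbc (by rw [e]))
    have hdet : Stmt8.det3 a b c ≠ 0 := fun e => hcol ((Stmt8.collinear_iff_det3 a b c).2 e)
    rw [Stmt8.collinear_iff_det3, Stmt8.det3_phi hxa hxb hxc]
    exact div_ne_zero (neg_ne_zero.2 hdet) (ne_of_gt (by positivity))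
  have c2 : DistinctX ↑T := by
    intro pa ha pb hb hne
    obtain ⟨a, haA, rfl⟩ := Finset.mem_image.1 (Finset.mem_coe.1 ha)
    obtain ⟨b, hbA, rfl⟩ := Finset.mem_image.1 (Finset.mem_coe.1 hb)
    have hxa := hAx a haA
    have hxb := hAx b hbA
    have hcol := hgp' ((0, 0) : Pt) (Finset.mem_coe.2 hp0) a (Finset.mem_coe.2 (hAS' a haA))
      b (Finset.mem_coe.2 (hAS' b hbA)) (fun e => hAne0 a haA e.symm)
      (fun e => hAne0 b hbA e.symm) (fun e => hne (by rw [e]))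
    have hdet : Stmt8.det3 ((0, 0) : Pt) a b ≠ 0 :=
      fun e => hcol ((Stmt8.collinear_iff_det3 _ a b).2 e)
    intro he
    exact hdet ((Stmt8.phi_fst_eq_iff hxa hxb).1 he)
  have c3 : ¬ HasCup n ↑T := by
    rintro ⟨f, hf1, hf2, hf3⟩
    have hdet := Stmt8.cup_master hf2 hf3
    have hfinj : Set.InjOn f ↑(Finset.range n) := by
      intro i hi j hj hij
      simp only [Finset.coe_range, Set.mem_Iio] at hi hj
      rcases lt_trichotomy i j with h | h | h
      · exact absurd (congrArg Prod.fst hij) (ne_of_lt (hf2 i j h hj))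
      · exact h
      · exact absurd (congrArg Prod.fst hij.symm) (ne_of_lt (hf2 j i h hi))
    apply hpull ((Finset.range n).image f)
    · intro u hu
      obtain ⟨i, hi, rfl⟩ := Finset.mem_image.1 (Finset.mem_coe.1 hu)
      exact hf1 i (Finset.mem_range.1 hi)
    · rw [Finset.card_image_of_injOn hfinj, Finset.card_range]
    · exact Stmt8.cup_convexPos (by omega) hf2 hdet
  have c4 : ¬ HasCap (n - 1) ↑T := by
    rintro ⟨f, hf1, hf2, hf3⟩
    have hex : ∀ i, i < n - 1 → ∃ r, r ∈ A ∧ Stmt8.phi r = f i := by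
      intro i hi
      have h1 := hf1 i hi
      obtain ⟨r, hr, h⟩ := Finset.mem_image.1 (Finset.mem_coe.1 h1)
      exact ⟨r, hr, h⟩
    choose qf hq1 hq2 using hex
    set q' : ℕ → Pt := fun i => if h : i < n - 1 then qf i h else ((1, 0) : Pt) with hq'
    have hq'A : ∀ i, i < n - 1 → q' i ∈ A := by
      intro i hi; simp only [hq', dif_pos hi]; exact hq1 i hi
    have hq'phi : ∀ i, i < n - 1 → Stmt8.phi (q' i) = f i := by
      intro i hi; simp only [hq', dif_pos hi]; exact hq2 i hi
    have hq'x : ∀ i, i < n - 1 → 0 < (q' i).1 := fun i hi => hAx _ (hq'A i hi)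
    have hxx : ∀ i j, i < j → j < n - 1 →
        (Stmt8.phi (q' i)).1 < (Stmt8.phi (q' j)).1 := by
      intro i j hij hj
      rw [hq'phi i (lt_trans hij hj), hq'phi j hj]
      exact hf2 i j hij hj
    have hdd : ∀ a b c, a < b → b < c → c < n - 1 →
        Stmt8.det3 (Stmt8.phi (q' a)) (Stmt8.phi (q' b)) (Stmt8.phi (q' c)) < 0 := by
      intro a b c h1 h2 h3
      rw [hq'phi a (by omega), hq'phi b (by omega), hq'phi c h3]
      exact Stmt8.cap_master hf2 hf3 a b c h1 h2 h3
    have hVpos := Stmt8.cap_origin_convexPos (k := n - 1) (by omega) hq'x hxx hdd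
    have hVsub : ↑(insert ((0, 0) : Pt) ((Finset.range (n - 1)).image q')) ⊆
        (↑S' : Set Pt) := by
      intro x hx
      rcases Finset.mem_insert.1 (Finset.mem_coe.1 hx) with rfl | hx2
      · exact Finset.mem_coe.2 hp0
      · obtain ⟨i, hi, rfl⟩ := Finset.mem_image.1 hx2
        exact Finset.mem_coe.2 (hAS' _ (hq'A i (Finset.mem_range.1 hi)))
    have hVcard : (insert ((0, 0) : Pt) ((Finset.range (n - 1)).image q')).card = n := by
      rw [Finset.card_insert_of_notMem, Finset.card_image_of_injOn, Finset.card_range]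
      · omega
      · intro i hi j hj hij
        simp only [Finset.coe_range, Set.mem_Iio] at hi hj
        rcases lt_trichotomy i j with h | h | h
        · exact absurd (congrArg Prod.fst (congrArg Stmt8.phi hij)) (ne_of_lt (hxx i j h hj))
        · exact h
        · exact absurd (congrArg Prod.fst (congrArg Stmt8.phi hij.symm))
            (ne_of_lt (hxx j i h hi))
      · intro hmem
        obtain ⟨i, hi, he⟩ := Finset.mem_image.1 hmem
        have := hq'x i (Finset.mem_range.1 hi)
        rw [he] at this
        exact lt_irrefl _ this
    exact hno' ⟨_, hVsub, hVcard, hVpos⟩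
  have c5 : ¬ HasConvexNGon n ↑T := by
    rintro ⟨U, h1, h2, h3⟩
    exact hpull U h1 h2 h3
  have hmemz : (S.card - 1) ∈ {N : ℕ | ∃ S : Finset Pt, S.card = N ∧ GenPos ↑S ∧
      DistinctX ↑S ∧ ¬ HasCup n ↑S ∧ ¬ HasCap (n - 1) ↑S ∧ ¬ HasConvexNGon n ↑S} :=
    ⟨T, hcardT, c1, c2, c3, c4, c5⟩
  have hle := hzub hmemz
  omega
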